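/- Let l and l' be distinct primes. Then there is no finite nonabelian simple group S that is simultaneously a continuous quotient of GL₂(ℤ_l) and a continuous quotient of GL₂(ℤ_{l'}). -/

import Mathlib

instance (p : Nat.Primes) : Fact (p : ℕ).Prime := ⟨p.2⟩

/-- `GL₂(ℤ_p)`: the unit group of the ring of 2×2 matrices over the `p`-adic integers, with its
natural topology. -/
abbrev GL2Zp (p : Nat.Primes) : Type := (Matrix (Fin 2) (Fin 2) ℤ_[(p : ℕ)])ˣ

open Matrix

namespace GL2Aux

variable {p : ℕ} [Fact p.Prime]

/-- All entries of `X` are divisible by `p^m`. -/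
def EntDvd (p : ℕ) [Fact p.Prime] (m : ℕ) (X : Matrix (Fin 2) (Fin 2) ℤ_[p]) : Prop :=
  ∀ i j, ((p : ℤ_[p]) ^ m) ∣ X i j

theorem EntDvd.add {m : ℕ} {X Y : Matrix (Fin 2) (Fin 2) ℤ_[p]} (hX : EntDvd p m X)
    (hY : EntDvd p m Y) : EntDvd p m (X + Y) := fun i j => by
  simpa using dvd_add (hX i j) (hY i j)

theorem EntDvd.mul {a b : ℕ} {X Y : Matrix (Fin 2) (Fin 2) ℤ_[p]} (hX : EntDvd p a X)
    (hY : EntDvd p b Y) : EntDvd p (a + b) (X * Y) := fun i j => by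
  rw [Matrix.mul_apply, pow_add]
  exact Finset.dvd_sum fun k _ => mul_dvd_mul (hX i k) (hY k j)

theorem EntDvd.mul_left {m : ℕ} (A : Matrix (Fin 2) (Fin 2) ℤ_[p])
    {X : Matrix (Fin 2) (Fin 2) ℤ_[p]} (hX : EntDvd p m X) : EntDvd p m (A * X) := by
  have hA : EntDvd p 0 A := fun i j => by simp
  simpa using hA.mul hX

theorem EntDvd.mul_right {m : ℕ} (A : Matrix (Fin 2) (Fin 2) ℤ_[p])
    {X : Matrix (Fin 2) (Fin 2) ℤ_[p]} (hX : EntDvd p m X) : EntDvd p m (X * A) := by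
  have hA : EntDvd p 0 A := fun i j => by simp
  simpa using hX.mul hA

theorem entDvd_pow_sub_one {x : Matrix (Fin 2) (Fin 2) ℤ_[p]} (hx : EntDvd p 1 (x - 1)) :
    ∀ i : ℕ, EntDvd p 1 (x ^ i - 1) := by
  intro i
  induction i with
  | zero => intro i j; simp
  | succ n ih =>
      have h : x ^ (n + 1) - 1 = x ^ n * (x - 1) + (x ^ n - 1) := by
        rw [pow_succ]; noncomm_ring
      rw [h]
      exact (hx.mul_left _).add ih

theorem entDvd_step {m : ℕ} {x : Matrix (Fin 2) (Fin 2) ℤ_[p]}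
    (hx1 : EntDvd p 1 (x - 1)) (hx : EntDvd p m (x - 1)) : EntDvd p (m + 1) (x ^ p - 1) := by
  have hgeom : (∑ i ∈ Finset.range p, x ^ i) * (x - 1) = x ^ p - 1 := geom_sum_mul x p
  have hsum : ∑ i ∈ Finset.range p, x ^ i
      = p • (1 : Matrix (Fin 2) (Fin 2) ℤ_[p]) + ∑ i ∈ Finset.range p, (x ^ i - 1) := by
    rw [Finset.sum_sub_distrib, Finset.sum_const, Finset.card_range]
    abel
  rw [← hgeom, hsum, add_mul]
  apply EntDvd.add
  · intro i j
    have h1 : p • (1 : Matrix (Fin 2) (Fin 2) ℤ_[p]) * (x - 1) = p • (x - 1) := by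
      rw [smul_mul_assoc, one_mul]
    rw [h1]
    have : (p • (x - 1)) i j = (p : ℤ_[p]) * (x - 1) i j := by
      simp [nsmul_eq_mul]
    rw [this, pow_succ']
    exact mul_dvd_mul_left _ (hx i j)
  · have hE : EntDvd p 1 (∑ i ∈ Finset.range p, (x ^ i - 1)) := by
      intro i j
      rw [Matrix.sum_apply]
      exact Finset.dvd_sum fun k _ => by simpa using entDvd_pow_sub_one hx1 k i j
    simpa [add_comm] using hE.mul hx

theorem entDvd_pow_pow {x : Matrix (Fin 2) (Fin 2) ℤ_[p]} (hx : EntDvd p 1 (x - 1)) (k : ℕ) :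
    EntDvd p (k + 1) (x ^ p ^ k - 1) := by
  induction k with
  | zero => simpa using hx
  | succ n ih =>
      have h : x ^ p ^ (n + 1) = (x ^ p ^ n) ^ p := by rw [← pow_mul, pow_succ]
      rw [h]
      have h1 : EntDvd p 1 (x ^ p ^ n - 1) := entDvd_pow_sub_one hx _
      exact entDvd_step h1 ih

end GL2Aux

namespace GL2Aux

open Filter Topology

theorem tendsto_one_of_entDvd {p : ℕ} [Fact p.Prime] {A : ℕ → Matrix (Fin 2) (Fin 2) ℤ_[p]}
    (h : ∀ k, EntDvd p (k + 1) (A k - 1)) : Tendsto A atTop (𝓝 1) := by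
  refine tendsto_pi_nhds.mpr ?_
  intro i
  rw [tendsto_pi_nhds]
  intro j
  have hp1 : (1 : ℝ) < (p : ℝ) := by
    exact_mod_cast (Fact.out : p.Prime).one_lt
  rw [tendsto_iff_norm_sub_tendsto_zero]
  apply squeeze_zero (fun k => norm_nonneg _) (g := fun k => ((p : ℝ)⁻¹) ^ (k + 1))
  · intro k
    have hmem : (A k - 1) i j ∈ (Ideal.span {(p : ℤ_[p]) ^ (k + 1)} : Ideal ℤ_[p]) :=
      Ideal.mem_span_singleton.mpr (h k i j)
    have := (PadicInt.norm_le_pow_iff_mem_span_pow ((A k - 1) i j) (k + 1)).mpr hmem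
    have he : ((A k - 1) i j : ℤ_[p]) = A k i j - (1 : Matrix (Fin 2) (Fin 2) ℤ_[p]) i j := by
      simp [Matrix.sub_apply]
    rw [he] at this
    refine le_trans this (le_of_eq ?_)
    rw [inv_pow, _root_.zpow_neg, zpow_natCast]
  · have h0 : (0 : ℝ) ≤ (p : ℝ)⁻¹ := by positivity
    have h1 : (p : ℝ)⁻¹ < 1 := by
      rw [inv_lt_one_iff₀]; right; exact hp1
    have := (tendsto_pow_atTop_nhds_zero_of_lt_one h0 h1).comp (tendsto_add_atTop_nat 1)
    simpa [Function.comp_def] using this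

end GL2Aux

namespace GL2Aux

open Filter Topology

theorem EntDvd.neg {p m : ℕ} [Fact p.Prime] {X : Matrix (Fin 2) (Fin 2) ℤ_[p]}
    (hX : EntDvd p m X) : EntDvd p m (-X) := fun i j => by
  simpa using (hX i j).neg_right

theorem inv_entDvd {p : ℕ} [Fact p.Prime] (g : (Matrix (Fin 2) (Fin 2) ℤ_[p])ˣ)
    (hg : EntDvd p 1 ((g : Matrix (Fin 2) (Fin 2) ℤ_[p]) - 1)) :
    EntDvd p 1 ((↑(g⁻¹) : Matrix (Fin 2) (Fin 2) ℤ_[p]) - 1) := by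
  have h : (↑(g⁻¹) : Matrix (Fin 2) (Fin 2) ℤ_[p]) - 1
      = (↑(g⁻¹) : Matrix (Fin 2) (Fin 2) ℤ_[p]) * (-((g : Matrix (Fin 2) (Fin 2) ℤ_[p]) - 1)) := by
    have := g.inv_mul
    rw [mul_neg, mul_sub, mul_one]
    rw [show ((g⁻¹ : (Matrix (Fin 2) (Fin 2) ℤ_[p])ˣ) : Matrix (Fin 2) (Fin 2) ℤ_[p])
        * (g : Matrix (Fin 2) (Fin 2) ℤ_[p]) = 1 from by exact_mod_cast this]
    noncomm_ring
  rw [h]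
  exact EntDvd.mul_left _ hg.neg

theorem exists_ppow_eq_one {p : ℕ} [Fact p.Prime] {S : Type} [Group S] [TopologicalSpace S]
    [DiscreteTopology S] (f : (Matrix (Fin 2) (Fin 2) ℤ_[p])ˣ →* S) (hc : Continuous f)
    (g : (Matrix (Fin 2) (Fin 2) ℤ_[p])ˣ)
    (hg : EntDvd p 1 ((g : Matrix (Fin 2) (Fin 2) ℤ_[p]) - 1)) :
    ∃ k : ℕ, f g ^ p ^ k = 1 := by
  have T : Tendsto (fun k => g ^ p ^ k) atTop (𝓝 1) := by
    rw [Units.isInducing_embedProduct.tendsto_nhds_iff]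
    have e1 : Units.embedProduct _ (1 : (Matrix (Fin 2) (Fin 2) ℤ_[p])ˣ) = (1, 1) := by
      rfl
    rw [e1]
    apply Filter.Tendsto.prodMk_nhds
    · have : ∀ k : ℕ, ((g ^ p ^ k : (Matrix (Fin 2) (Fin 2) ℤ_[p])ˣ) : Matrix (Fin 2) (Fin 2) ℤ_[p])
          = (g : Matrix (Fin 2) (Fin 2) ℤ_[p]) ^ p ^ k := fun k => Units.val_pow_eq_pow_val g _
      simpa [Units.embedProduct, Function.comp_def, this] using
        tendsto_one_of_entDvd (fun k => entDvd_pow_pow hg k)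
    · have h2 : Tendsto (fun k : ℕ => ((g⁻¹ : (Matrix (Fin 2) (Fin 2) ℤ_[p])ˣ)
          : Matrix (Fin 2) (Fin 2) ℤ_[p]) ^ p ^ k) atTop (𝓝 1) :=
        tendsto_one_of_entDvd (fun k => entDvd_pow_pow (inv_entDvd g hg) k)
      have h3 := (MulOpposite.continuous_op.tendsto (1 : Matrix (Fin 2) (Fin 2) ℤ_[p])).comp h2
      have h4 : ∀ k : ℕ, (((g ^ p ^ k)⁻¹ : (Matrix (Fin 2) (Fin 2) ℤ_[p])ˣ)
          : Matrix (Fin 2) (Fin 2) ℤ_[p])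
          = ((g⁻¹ : (Matrix (Fin 2) (Fin 2) ℤ_[p])ˣ) : Matrix (Fin 2) (Fin 2) ℤ_[p]) ^ p ^ k := by
        intro k; rw [← inv_pow]; exact Units.val_pow_eq_pow_val _ _
      simpa [Units.embedProduct, Function.comp_def, h4, MulOpposite.op_one] using h3
  have T2 : Tendsto (fun k => f (g ^ p ^ k)) atTop (𝓝 (1 : S)) := by
    have := (hc.tendsto 1).comp T
    simpa using this
  rw [nhds_discrete, tendsto_pure] at T2
  obtain ⟨k, hk⟩ := T2.exists
  exact ⟨k, by rw [← map_pow]; exact hk⟩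

end GL2Aux

namespace GL2Aux

open Filter Topology

variable {p : ℕ} [Fact p.Prime]

/-- Reduction mod `p` on `GL₂`. -/
noncomputable def redHom (p : ℕ) [Fact p.Prime] :
    (Matrix (Fin 2) (Fin 2) ℤ_[p])ˣ →* (Matrix (Fin 2) (Fin 2) (ZMod p))ˣ :=
  Units.map ((PadicInt.toZMod).mapMatrix :
    Matrix (Fin 2) (Fin 2) ℤ_[p] →+* Matrix (Fin 2) (Fin 2) (ZMod p)).toMonoidHom

theorem redHom_surjective : Function.Surjective (redHom p) := by
  intro u
  haveI : NeZero p := ⟨(Fact.out : p.Prime).ne_zero⟩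
  set B : Matrix (Fin 2) (Fin 2) (ZMod p) := (u : Matrix (Fin 2) (Fin 2) (ZMod p)) with hB
  set A : Matrix (Fin 2) (Fin 2) ℤ_[p] := Matrix.of fun i j => ((B i j).val : ℤ_[p]) with hA
  have hmap : A.map PadicInt.toZMod = B := by
    ext i j
    simp only [Matrix.map_apply, hA, Matrix.of_apply, map_natCast]
    exact ZMod.natCast_rightInverse (B i j)
  have hBdet : IsUnit B.det := (Matrix.isUnit_iff_isUnit_det _).mp u.isUnit
  have hdet : IsUnit A.det := by
    by_contra hnd
    have hmem : A.det ∈ IsLocalRing.maximalIdeal ℤ_[p] :=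
      (IsLocalRing.mem_maximalIdeal _).mpr hnd
    rw [← PadicInt.ker_toZMod, RingHom.mem_ker] at hmem
    rw [RingHom.map_det, RingHom.mapMatrix_apply, hmap] at hmem
    rw [hmem] at hBdet
    exact not_isUnit_zero hBdet
  obtain ⟨v, hv⟩ := (Matrix.isUnit_iff_isUnit_det A).mpr hdet
  refine ⟨v, Units.ext ?_⟩
  show (v : Matrix (Fin 2) (Fin 2) ℤ_[p]).map PadicInt.toZMod = B
  rw [hv, hmap]

theorem entDvd_of_mem_ker {g : (Matrix (Fin 2) (Fin 2) ℤ_[p])ˣ} (hg : g ∈ (redHom p).ker) :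
    EntDvd p 1 ((g : Matrix (Fin 2) (Fin 2) ℤ_[p]) - 1) := by
  intro i j
  have h1 : ((g : Matrix (Fin 2) (Fin 2) ℤ_[p]).map PadicInt.toZMod) = 1 := by
    have := congrArg Units.val (MonoidHom.mem_ker.mp hg)
    exact this
  have h2 : PadicInt.toZMod (((g : Matrix (Fin 2) (Fin 2) ℤ_[p]) - 1) i j) = 0 := by
    rw [Matrix.sub_apply, map_sub]
    have ha : PadicInt.toZMod ((g : Matrix (Fin 2) (Fin 2) ℤ_[p]) i j)
        = ((g : Matrix (Fin 2) (Fin 2) ℤ_[p]).map PadicInt.toZMod) i j := rfl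
    rw [ha, h1]
    rcases eq_or_ne i j with rfl | hij
    · simp
    · simp [Matrix.one_apply, hij]
  have h3 : ((g : Matrix (Fin 2) (Fin 2) ℤ_[p]) - 1) i j ∈ IsLocalRing.maximalIdeal ℤ_[p] := by
    rw [← PadicInt.ker_toZMod, RingHom.mem_ker]; exact h2
  rw [PadicInt.maximalIdeal_eq_span_p, Ideal.mem_span_singleton] at h3
  simpa using h3

end GL2Aux

namespace GL2Aux

open Matrix

variable {F : Type} [Field F]

/-- A transvection as a unit of the matrix ring. -/
def tunit (t : TransvectionStruct (Fin 2) F) : (Matrix (Fin 2) (Fin 2) F)ˣ :=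
  ⟨t.toMatrix, t.inv.toMatrix, t.mul_inv, t.inv_mul⟩

@[simp] theorem tunit_val (t : TransvectionStruct (Fin 2) F) :
    (tunit t : Matrix (Fin 2) (Fin 2) F) = t.toMatrix := rfl

theorem transvection_pow {i j : Fin 2} (h : i ≠ j) (c : F) (n : ℕ) :
    Matrix.transvection i j c ^ n = Matrix.transvection i j ((n : F) * c) := by
  induction n with
  | zero => simp [Matrix.transvection]
  | succ m ih =>
      rw [pow_succ, ih, Matrix.transvection_mul_transvection_same i j h]
      congr 1
      push_cast
      ring

theorem tunit_pow_card {p : ℕ} [Fact p.Prime] (t : TransvectionStruct (Fin 2) (ZMod p)) :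
    tunit t ^ p = 1 := by
  apply Units.ext
  have : (tunit t ^ p : (Matrix (Fin 2) (Fin 2) (ZMod p))ˣ).val = t.toMatrix ^ p :=
    Units.val_pow_eq_pow_val _ _
  rw [this]
  rcases t with ⟨i, j, hij, c⟩
  rw [TransvectionStruct.toMatrix_mk, transvection_pow hij, ZMod.natCast_self, zero_mul]
  simp [Matrix.transvection]

theorem exists_unit_of_list (N : Subgroup (Matrix (Fin 2) (Fin 2) F)ˣ)
    (hN : ∀ t : TransvectionStruct (Fin 2) F, tunit t ∈ N) :
    ∀ L : List (TransvectionStruct (Fin 2) F),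
      ∃ u ∈ N, (u : Matrix (Fin 2) (Fin 2) F) = (L.map TransvectionStruct.toMatrix).prod := by
  intro L
  induction L with
  | nil => exact ⟨1, N.one_mem, by simp⟩
  | cons t L ih =>
      obtain ⟨u, hu, huv⟩ := ih
      exact ⟨tunit t * u, N.mul_mem (hN t) hu, by simp [huv]⟩

theorem transvection01 (c : F) : Matrix.transvection (0 : Fin 2) 1 c = !![1, c; 0, 1] := by
  ext i j
  fin_cases i <;> fin_cases j <;>
    simp [Matrix.transvection, Matrix.single, Matrix.one_apply]

theorem transvection10 (c : F) : Matrix.transvection (1 : Fin 2) 0 c = !![1, 0; c, 1] := by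
  ext i j
  fin_cases i <;> fin_cases j <;>
    simp [Matrix.transvection, Matrix.single, Matrix.one_apply]

theorem diagonal_fin_two (a b : F) : Matrix.diagonal ![a, b] = !![a, 0; 0, b] := by
  ext i j
  fin_cases i <;> fin_cases j <;> simp [Matrix.diagonal]

theorem diag_unit_mem (N : Subgroup (Matrix (Fin 2) (Fin 2) F)ˣ)
    (hN : ∀ t : TransvectionStruct (Fin 2) F, tunit t ∈ N) (a : F) (ha : a ≠ 0) :
    ∃ u ∈ N, (u : Matrix (Fin 2) (Fin 2) F) = Matrix.diagonal ![a, a⁻¹] := by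
  have h01 : (0 : Fin 2) ≠ 1 := by decide
  have h10 : (1 : Fin 2) ≠ 0 := by decide
  refine ⟨tunit ⟨0, 1, h01, a⟩ * tunit ⟨1, 0, h10, -a⁻¹⟩ * tunit ⟨0, 1, h01, a⟩ *
      tunit ⟨0, 1, h01, -1⟩ * tunit ⟨1, 0, h10, 1⟩ * tunit ⟨0, 1, h01, -1⟩, ?_, ?_⟩
  · exact N.mul_mem (N.mul_mem (N.mul_mem (N.mul_mem (N.mul_mem (hN _) (hN _)) (hN _)) (hN _))
      (hN _)) (hN _)
  · push_cast
    simp only [tunit_val, TransvectionStruct.toMatrix_mk, transvection01, transvection10,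
      diagonal_fin_two]
    rw [Matrix.mul_fin_two, Matrix.mul_fin_two, Matrix.mul_fin_two, Matrix.mul_fin_two,
      Matrix.mul_fin_two]
    congr 1 <;> field_simp <;> simp <;> field_simp

end GL2Aux

namespace GL2Aux

open Matrix

theorem card_dvd_keyFF (p : ℕ) [Fact p.Prime] {S : Type} [Group S] [Finite S]
    (ψ : (Matrix (Fin 2) (Fin 2) (ZMod p))ˣ →* S) (hψ : Function.Surjective ψ) :
    Nat.card S ∣ (p ^ 2 - 1) * (p ^ 2 - p) := by
  have h := Subgroup.card_dvd_of_surjective ψ hψ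
  have hcard : Nat.card (Matrix (Fin 2) (Fin 2) (ZMod p))ˣ = (p ^ 2 - 1) * (p ^ 2 - p) := by
    have := Matrix.card_GL_field (𝔽 := ZMod p) (n := 2)
    rw [show Nat.card (Matrix (Fin 2) (Fin 2) (ZMod p))ˣ = Nat.card (GL (Fin 2) (ZMod p)) from rfl,
      this, Fin.prod_univ_two]
    simp [ZMod.card]
  rwa [hcard] at h

theorem dvd_card_keyFF (p : ℕ) [Fact p.Prime] {S : Type} [Group S] [Finite S]
    (hS : IsSimpleGroup S) (hna : ¬ ∀ a b : S, a * b = b * a)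
    (ψ : (Matrix (Fin 2) (Fin 2) (ZMod p))ˣ →* S) (hψ : Function.Surjective ψ) :
    p ∣ Nat.card S := by
  by_contra hp
  apply hna
  have ht : ∀ t : TransvectionStruct (Fin 2) (ZMod p), tunit t ∈ ψ.ker := by
    intro t
    rw [MonoidHom.mem_ker, ← orderOf_eq_one_iff]
    have h1 : orderOf (ψ (tunit t)) ∣ p := by
      apply orderOf_dvd_of_pow_eq_one
      rw [← map_pow, tunit_pow_card, _root_.map_one]
    have h2 : orderOf (ψ (tunit t)) ∣ Nat.card S := orderOf_dvd_natCard _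
    have hcop : Nat.Coprime p (Nat.card S) :=
      (Nat.Prime.coprime_iff_not_dvd Fact.out).mpr hp
    exact Nat.eq_one_of_dvd_coprimes hcop h1 h2
  have hdet1 : ∀ u : (Matrix (Fin 2) (Fin 2) (ZMod p))ˣ,
      (u : Matrix (Fin 2) (Fin 2) (ZMod p)).det = 1 → u ∈ ψ.ker := by
    intro u hu
    obtain ⟨L, L', D, hdecomp⟩ :=
      Matrix.Pivot.exists_list_transvec_mul_diagonal_mul_list_transvec
        (u : Matrix (Fin 2) (Fin 2) (ZMod p))
    have hdet : D 0 * D 1 = 1 := by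
      have := congrArg Matrix.det hdecomp
      rw [hu] at this
      rw [Matrix.det_mul, Matrix.det_mul, Matrix.TransvectionStruct.det_toMatrix_prod,
        Matrix.TransvectionStruct.det_toMatrix_prod, Matrix.det_diagonal,
        Fin.prod_univ_two] at this
      simpa using this.symm
    have hD0 : D 0 ≠ 0 := by
      intro h0
      rw [h0, zero_mul] at hdet
      exact zero_ne_one hdet
    have hD1 : D 1 = (D 0)⁻¹ := by
      field_simp
      linear_combination hdet
    have hDD : Matrix.diagonal D = Matrix.diagonal ![D 0, (D 0)⁻¹] := by
      have hfun : D = ![D 0, (D 0)⁻¹] := by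
        funext i; fin_cases i
        · simp
        · simpa using hD1
      rw [hfun]; simp
    obtain ⟨uL, huL, huLv⟩ := exists_unit_of_list ψ.ker ht L
    obtain ⟨uR, huR, huRv⟩ := exists_unit_of_list ψ.ker ht L'
    obtain ⟨uD, huD, huDv⟩ := diag_unit_mem ψ.ker ht (D 0) hD0
    have hu : u = uL * uD * uR := by
      apply Units.ext
      push_cast
      rw [huLv, huRv, huDv, ← hDD]
      exact hdecomp
    rw [hu]
    exact ψ.ker.mul_mem (ψ.ker.mul_mem huL huD) huR
  intro a b
  obtain ⟨A, rfl⟩ := hψ a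
  obtain ⟨B, rfl⟩ := hψ b
  have hcomm : ψ (A * B * A⁻¹ * B⁻¹) = 1 := by
    apply hdet1
    have hmap : ∀ u : (Matrix (Fin 2) (Fin 2) (ZMod p))ˣ,
        (u : Matrix (Fin 2) (Fin 2) (ZMod p)).det
          = ((Units.map (Matrix.detMonoidHom) u : (ZMod p)ˣ) : ZMod p) := fun u => rfl
    rw [hmap]
    have : Units.map (Matrix.detMonoidHom) (A * B * A⁻¹ * B⁻¹)
        = Units.map Matrix.detMonoidHom A * Units.map Matrix.detMonoidHom B *
          (Units.map Matrix.detMonoidHom A)⁻¹ * (Units.map Matrix.detMonoidHom B)⁻¹ := by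
      simp
    rw [this]
    generalize Units.map (Matrix.detMonoidHom) A = x
    generalize Units.map (Matrix.detMonoidHom) B = y
    rw [mul_comm x y]
    group
    simp
  rw [_root_.map_mul, _root_.map_mul, map_inv, map_inv, mul_inv_eq_one,
    mul_inv_eq_iff_eq_mul] at hcomm
  rw [← _root_.map_mul]
  exact hcomm

end GL2Aux

namespace GL2Aux

open Matrix

theorem key (p : ℕ) [Fact p.Prime] {S : Type} [Group S] [TopologicalSpace S] [DiscreteTopology S]
    [Finite S] (hS : IsSimpleGroup S) (hna : ¬ ∀ a b : S, a * b = b * a)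
    (f : (Matrix (Fin 2) (Fin 2) ℤ_[p])ˣ →* S) (hc : Continuous f)
    (hf : Function.Surjective f) :
    p ∣ Nat.card S ∧ Nat.card S ∣ (p ^ 2 - 1) * (p ^ 2 - p) := by
  haveI : IsSimpleGroup S := hS
  have hnormal : (((redHom p).ker.map f)).Normal :=
    Subgroup.Normal.map (MonoidHom.normal_ker _) f hf
  rcases hS.eq_bot_or_eq_top_of_normal _ hnormal with hbot | htop
  · -- the kernel of reduction dies in S; factor through GL₂(F_p)
    have hker : (redHom p).ker ≤ f.ker := (Subgroup.map_eq_bot_iff _).mp hbot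
    set σ := Function.surjInv (redHom_surjective (p := p)) with hσ
    have hrs : Function.RightInverse σ (redHom p) :=
      Function.rightInverse_surjInv _
    set ψ := (redHom p).liftOfRightInverse σ hrs ⟨f, hker⟩ with hψdef
    have hcomp : ∀ x, ψ (redHom p x) = f x := fun x =>
      (redHom p).liftOfRightInverse_comp_apply σ hrs ⟨f, hker⟩ x
    have hψ : Function.Surjective ψ := by
      intro s
      obtain ⟨a, rfl⟩ := hf s
      exact ⟨redHom p a, hcomp a⟩
    exact ⟨dvd_card_keyFF p hS hna ψ hψ, card_dvd_keyFF p ψ hψ⟩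
  · -- S would be a p-group
    exfalso
    have hPG : IsPGroup p S := by
      intro s
      have hs : s ∈ (redHom p).ker.map f := htop ▸ Subgroup.mem_top s
      obtain ⟨g, hg, rfl⟩ := hs
      obtain ⟨k, hk⟩ := exists_ppow_eq_one f hc g (entDvd_of_mem_ker hg)
      exact ⟨k, hk⟩
    have hcent : Nontrivial (Subgroup.center S) := hPG.center_nontrivial
    rcases hS.eq_bot_or_eq_top_of_normal (Subgroup.center S) inferInstance with h | h
    · rw [h] at hcent
      rcases hcent with ⟨⟨x, hx⟩, ⟨y, hy⟩, hxy⟩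
      rw [Subgroup.mem_bot] at hx hy
      exact hxy (by simp [Subtype.ext_iff, hx, hy])
    · apply hna
      intro a b
      have hb : b ∈ Subgroup.center S := h ▸ Subgroup.mem_top b
      exact (Subgroup.mem_center_iff.mp hb a)

theorem arith {l l' n : ℕ} (hl : l.Prime) (hl' : l'.Prime) (hlt : l < l')
    (h1 : l ∣ n) (h1' : l' ∣ n) (h2 : n ∣ (l ^ 2 - 1) * (l ^ 2 - l)) : n = 6 ∧ l = 2 := by
  have h2l := hl.two_le
  obtain ⟨m, rfl⟩ : ∃ m, l = m + 2 := ⟨l - 2, by omega⟩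
  have hsq : (m + 2) ^ 2 = m * m + 4 * m + 4 := by ring
  have e1 : (m + 2) ^ 2 - 1 = (m + 3) * (m + 1) := by
    have : (m + 3) * (m + 1) = m * m + 4 * m + 3 := by ring
    omega
  have e2 : (m + 2) ^ 2 - (m + 2) = (m + 2) * (m + 1) := by
    have : (m + 2) * (m + 1) = m * m + 3 * m + 2 := by ring
    omega
  rw [e1, e2] at h2
  have hdvd : l' ∣ (m + 3) * (m + 1) * ((m + 2) * (m + 1)) := h1'.trans h2
  have hm0 : m = 0 := by
    have hcases := (hl'.dvd_mul.mp hdvd)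
    have hne1 : ¬ l' ∣ (m + 1) := fun hd =>
      absurd (Nat.le_of_dvd (by omega) hd) (by omega)
    have hne2 : ¬ l' ∣ (m + 2) := fun hd => by
      have := (Nat.prime_dvd_prime_iff_eq hl' hl).mp hd
      omega
    have h3 : l' ∣ (m + 3) := by
      rcases hcases with h | h
      · rcases hl'.dvd_mul.mp h with h | h
        · exact h
        · exact absurd h hne1
      · rcases hl'.dvd_mul.mp h with h | h
        · exact absurd h hne2
        · exact absurd h hne1
    have hl'eq : l' = m + 3 := by
      have := Nat.le_of_dvd (by omega) h3
      omega
    by_contra hm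
    have hodd : Odd (m + 2) := hl.odd_of_ne_two (by omega)
    have heven : Even (m + 3) := by
      rcases hodd with ⟨k, hk⟩
      exact ⟨k + 1, by omega⟩
    have := (Nat.Prime.even_iff hl').mp (hl'eq ▸ heven)
    omega
  subst hm0
  have hl'3 : l' = 3 := by
    have hcases := (hl'.dvd_mul.mp hdvd)
    norm_num at hcases ⊢
    rcases hcases with h | h
    · exact (Nat.prime_dvd_prime_iff_eq hl' (by norm_num)).mp h
    · have := Nat.le_of_dvd (by norm_num) h
      interval_cases l' <;> omega
  subst hl'3
  norm_num at h2 h1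
  have h6 : 6 ∣ n := Nat.Coprime.mul_dvd_of_dvd_of_dvd (by norm_num) h1 h1'
  exact ⟨Nat.dvd_antisymm h2 h6, rfl⟩

theorem no_simple_of_card_six {S : Type} [Group S] [Finite S] (hS : IsSimpleGroup S)
    (h6 : Nat.card S = 6) : False := by
  haveI : Fact (Nat.Prime 3) := ⟨by norm_num⟩
  obtain ⟨g, hg⟩ := exists_prime_orderOf_dvd_card' (G := S) 3 (by rw [h6]; norm_num)
  set H := Subgroup.zpowers g with hH
  have hcard : Nat.card H = 3 := by rw [hH, Nat.card_zpowers, hg]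
  have hindex : H.index = 2 := by
    have hmul := H.card_mul_index
    rw [hcard, h6] at hmul
    omega
  have hnormal : H.Normal := by
    constructor
    intro x hx y
    rw [Subgroup.mul_mem_iff_of_index_two hindex, Subgroup.mul_mem_iff_of_index_two hindex,
      Subgroup.inv_mem_iff]
    tauto
  rcases hS.eq_bot_or_eq_top_of_normal H hnormal with h | h
  · rw [h, Subgroup.card_bot] at hcard
    omega
  · rw [h, Subgroup.card_top, h6] at hcard
    omega

end GL2Aux

/-- For distinct primes `l ≠ l'`, no finite nonabelian simple group is simultaneously a
continuous quotient of `GL₂(ℤ_l)` and of `GL₂(ℤ_{l'})`. -/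
theorem no_common_simple_quotient_of_gl2_padic (l l' : Nat.Primes) (hll : l ≠ l') :
    ¬ ∃ (S : Type) (instS : Group S),
      letI := instS
      letI : TopologicalSpace S := ⊥
      Finite S ∧ IsSimpleGroup S ∧ (¬ ∀ a b : S, a * b = b * a) ∧
        (∃ f : GL2Zp l →* S, Continuous f ∧ Function.Surjective f) ∧
        (∃ g : GL2Zp l' →* S, Continuous g ∧ Function.Surjective g) := by
  rintro ⟨S, instS, hfin, hsimple, hna, ⟨f, hfc, hfs⟩, ⟨g, hgc, hgs⟩⟩
  letI := instS
  letI : TopologicalSpace S := ⊥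
  haveI : DiscreteTopology S := ⟨rfl⟩
  haveI : Finite S := hfin
  obtain ⟨hd1, hd2⟩ := GL2Aux.key (l : ℕ) hsimple hna f hfc hfs
  obtain ⟨hd1', hd2'⟩ := GL2Aux.key (l' : ℕ) hsimple hna g hgc hgs
  have hne : (l : ℕ) ≠ (l' : ℕ) := fun h => hll (Subtype.ext h)
  rcases lt_or_gt_of_ne hne with h | h
  · obtain ⟨h6, -⟩ := GL2Aux.arith l.2 l'.2 h hd1 hd1' hd2
    exact GL2Aux.no_simple_of_card_six hsimple h6
  · obtain ⟨h6, -⟩ := GL2Aux.arith l'.2 l.2 h hd1' hd1 hd2'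
    exact GL2Aux.no_simple_of_card_six hsimple h6
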